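/- Let α, β, β′, γ ∈ ℝ with α > 0, β′ > 0, γ − α > 0, γ − β′ > 0 and γ − α − β′ > 0, and let x ∈ (−1, 1). Then Appell's function evaluated at second argument 1 satisfies F₁(α, β, β′; γ; x, 1) = (Γ(γ)Γ(γ−α−β′)/(Γ(γ−α)Γ(γ−β′))) · F(α, β; γ−β′; x), where the double series defining F₁(α,β,β′;γ;x,1) converges under the stated hypotheses. -/

import Mathlib

open Filter Finset MeasureTheory

/-- The Pochhammer symbol `(q)_k = q(q+1)⋯(q+k−1)`. -/
noncomputable def poch (q : ℝ) (k : ℕ) : ℝ := ∏ i ∈ Finset.range k, (q + (i : ℝ))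

/-- The Gauss hypergeometric series `F(a,b;c;x) = Σ_n (a)_n (b)_n / ((c)_n n!) xⁿ`. -/
noncomputable def gaussF (a b c x : ℝ) : ℝ :=
  ∑' n : ℕ, poch a n * poch b n / (poch c n * (n.factorial : ℝ)) * x ^ n

/-- Appell's first hypergeometric series
`F₁(α,β,β′;γ;x,y) = Σ_{m,n} (α)_{m+n}(β)_m(β′)_n/((γ)_{m+n} m! n!) x^m y^n`. -/
noncomputable def appellF1 (α β β' γ x y : ℝ) : ℝ :=
  ∑' p : ℕ × ℕ,
    poch α (p.1 + p.2) * poch β p.1 * poch β' p.2 /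
        (poch γ (p.1 + p.2) * (p.1.factorial : ℝ) * (p.2.factorial : ℝ)) *
      x ^ p.1 * y ^ p.2

lemma poch_zero (q : ℝ) : poch q 0 = 1 := by simp [poch]

lemma poch_succ (q : ℝ) (k : ℕ) : poch q (k + 1) = poch q k * (q + k) := by
  simp [poch, Finset.prod_range_succ]

lemma poch_pos {q : ℝ} (hq : 0 < q) (k : ℕ) : 0 < poch q k := by
  apply Finset.prod_pos; intro i _; positivity

lemma poch_nonneg {q : ℝ} (hq : 0 ≤ q) (k : ℕ) : 0 ≤ poch q k := by
  apply Finset.prod_nonneg; intro i _; positivity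

lemma abs_poch_le (q : ℝ) (k : ℕ) : |poch q k| ≤ poch |q| k := by
  rw [poch, poch, Finset.abs_prod]
  apply Finset.prod_le_prod (fun i _ => abs_nonneg _)
  intro i _
  calc |q + (i:ℝ)| ≤ |q| + |(i:ℝ)| := abs_add_le _ _
    _ = |q| + i := by rw [Nat.abs_cast]

lemma poch_le_poch {q r : ℝ} (hq : 0 ≤ q) (hqr : q ≤ r) (k : ℕ) : poch q k ≤ poch r k := by
  apply Finset.prod_le_prod (fun i _ => by positivity) (fun i _ => by linarith)

lemma poch_add (q : ℝ) (m n : ℕ) : poch q (m + n) = poch q m * poch (q + m) n := by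
  induction n with
  | zero => simp [poch_zero]
  | succ n ih =>
      rw [← Nat.add_assoc, poch_succ, ih, poch_succ]
      push_cast; ring

lemma Gamma_poch {a : ℝ} (ha : 0 < a) (n : ℕ) : Real.Gamma (a + n) = poch a n * Real.Gamma a := by
  induction n with
  | zero => simp [poch_zero]
  | succ n ih =>
      have h : a + (n + 1 : ℕ) = (a + n) + 1 := by push_cast; ring
      rw [h, Real.Gamma_add_one (by positivity), ih, poch_succ]; ring

lemma poch_one_eq (n : ℕ) : poch 1 n = n.factorial := by
  induction n with
  | zero => simp [poch_zero]
  | succ n ih => rw [poch_succ, ih, Nat.factorial_succ]; push_cast; ring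

lemma tendsto_linear_ratio (a b : ℝ) :
    Tendsto (fun n : ℕ => (a + n) / (b + n)) atTop (nhds 1) := by
  have h1 : Tendsto (fun n : ℕ => (b + n : ℝ)) atTop atTop :=
    tendsto_atTop_add_const_left _ b tendsto_natCast_atTop_atTop
  have h2 : Tendsto (fun n : ℕ => (a - b) / (b + n) + 1) atTop (nhds 1) := by
    have := (tendsto_const_nhds (x := (a - b)) (f := atTop (α := ℕ))).div_atTop h1
    simpa using this.add tendsto_const_nhds
  apply h2.congr'
  filter_upwards [h1.eventually_gt_atTop 0] with n hn
  field_simp; ring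

lemma summable_of_ratio_tendsto {u r : ℕ → ℝ} {L : ℝ} (hL : L < 1)
    (hr : Tendsto r atTop (nhds L))
    (h : ∀ᶠ n in atTop, |u (n + 1)| ≤ r n * |u n|) : Summable u := by
  apply summable_of_ratio_norm_eventually_le (r := (L + 1) / 2) (by linarith)
  have h2 : ∀ᶠ n in atTop, r n < (L + 1) / 2 := hr.eventually_lt_const (by linarith)
  filter_upwards [h, h2] with n h1 h2
  rw [Real.norm_eq_abs, Real.norm_eq_abs]
  nlinarith [abs_nonneg (u n)]

lemma summable_binom {b t : ℝ} (hb : 0 ≤ b) (ht0 : 0 ≤ t) (ht : t < 1) :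
    Summable (fun n : ℕ => poch b n / n.factorial * t ^ n) := by
  apply summable_of_ratio_tendsto (L := t) ht
      (r := fun n => (b + n) / (1 + n) * t)
  · simpa using (tendsto_linear_ratio b 1).mul_const t
  · filter_upwards with n
    have h1 : (0:ℝ) < n.factorial := by positivity
    have h2 : 0 ≤ poch b n := poch_nonneg hb n
    have key : poch b (n+1) / (n+1).factorial * t ^ (n+1)
        = (b + n) / (1 + n) * t * (poch b n / n.factorial * t ^ n) := by
      rw [poch_succ, Nat.factorial_succ, pow_succ]
      push_cast
      field_simp
      ring
    rw [key, abs_of_nonneg (by positivity), abs_of_nonneg (by positivity)]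

lemma summable_binom' (b t : ℝ) (ht : |t| < 1) :
    Summable (fun n : ℕ => poch b n / n.factorial * t ^ n) := by
  apply Summable.of_abs
  apply Summable.of_nonneg_of_le (fun n => abs_nonneg _) _
    (summable_binom (abs_nonneg b) (abs_nonneg t) ht)
  intro n
  have h1 : (0:ℝ) < n.factorial := by positivity
  rw [abs_mul, abs_div, abs_pow, Nat.abs_cast]
  gcongr
  exact abs_poch_le b n

/-- Summability of `Σ (a)_m (b)_m / ((c)_m m!) tᵐ` for `t < 1`. -/
lemma summable_gauss_lt_one {a b c t : ℝ} (ha : 0 ≤ a) (hb : 0 ≤ b) (hc : 0 < c)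
    (ht0 : 0 ≤ t) (ht : t < 1) :
    Summable (fun m : ℕ => poch a m * poch b m / (poch c m * m.factorial) * t ^ m) := by
  apply summable_of_ratio_tendsto (L := t) ht
      (r := fun m => (a + m) / (c + m) * ((b + m) / (1 + m)) * t)
  · have := ((tendsto_linear_ratio a c).mul (tendsto_linear_ratio b 1)).mul_const t
    simpa using this
  · filter_upwards with m
    have h1 : (0:ℝ) < m.factorial := by positivity
    have h2 : 0 ≤ poch a m := poch_nonneg ha m
    have h3 : 0 ≤ poch b m := poch_nonneg hb m
    have h4 : 0 < poch c m := poch_pos hc m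
    have key : poch a (m+1) * poch b (m+1) / (poch c (m+1) * (m+1).factorial) * t ^ (m+1)
        = (a + m) / (c + m) * ((b + m) / (1 + m)) * t *
          (poch a m * poch b m / (poch c m * m.factorial) * t ^ m) := by
      rw [poch_succ, poch_succ, poch_succ, Nat.factorial_succ, pow_succ]
      have h5 : (0:ℝ) < c + m := by positivity
      push_cast
      field_simp
      ring
    rw [key, abs_of_nonneg (by positivity), abs_of_nonneg (by positivity)]

/-- Summability of the Gauss series at `t = 1` when `c - a - b > 0`. -/
lemma summable_gauss_one {a b c : ℝ} (ha : 0 < a) (hb : 0 < b) (hc : a + b < c) :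
    Summable (fun n : ℕ => poch a n * poch b n / (poch c n * n.factorial)) := by
  set δ : ℝ := (c - a - b) / 2 with hδ
  have hδ0 : 0 < δ := by simp only [hδ]; linarith
  set p : ℝ := 1 + δ with hp
  set u : ℕ → ℝ := fun n => poch a n * poch b n / (poch c n * n.factorial) with hu
  set v : ℕ → ℝ := fun n => (n : ℝ) ^ (-p) with hv
  have hc0 : 0 < c := by linarith
  have hupos : ∀ n, 0 < u n := fun n => by
    have := poch_pos ha n; have := poch_pos hb n; have := poch_pos hc0 n
    have : (0:ℝ) < n.factorial := by positivity
    positivity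
  have hvpos : ∀ n : ℕ, 1 ≤ n → 0 < v n := fun n hn => by
    have : (0:ℝ) < n := by exact_mod_cast hn
    simp only [hv]; positivity
  -- choose N beyond which the ratio comparison holds
  obtain ⟨N₀, hN₀⟩ := exists_nat_ge ((a * b - c * (1 - p)) / δ)
  set N := N₀ + 1 with hN
  -- ratio comparison
  have hratio : ∀ n : ℕ, N ≤ n → u (n + 1) * v n ≤ u n * v (n + 1) := by
    intro n hn
    have hn1 : (1:ℕ) ≤ n := le_trans (by omega) hn
    have hnR : (1:ℝ) ≤ n := by exact_mod_cast hn1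
    have hnN : ((N₀ : ℝ)) ≤ n := by exact_mod_cast le_trans (by omega) hn
    have h1 : (0:ℝ) < n := by linarith
    have h2 : (0:ℝ) < n + 1 := by linarith
    have hfac : (0:ℝ) < n.factorial := by positivity
    have hpa := poch_pos ha n; have hpb := poch_pos hb n; have hpc := poch_pos hc0 n
    -- Bernoulli: (n/(n+1))^p ≥ 1 - p/(n+1)
    have hbern : 1 - p / (n + 1) ≤ ((n:ℝ) / (n + 1)) ^ p := by
      have hs : (-1 : ℝ) ≤ -(1 / (n + 1)) := by
        rw [neg_le_neg_iff]
        rw [div_le_one h2]; linarith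
      have := one_add_mul_self_le_rpow_one_add hs (by simp only [hp]; linarith : (1:ℝ) ≤ p)
      have heq : (1 : ℝ) + -(1 / (n+1)) = (n:ℝ) / (n + 1) := by field_simp; ring
      rw [heq] at this
      calc 1 - p / (n+1) = 1 + p * -(1 / (n+1)) := by ring
        _ ≤ _ := this
    -- polynomial inequality
    have hpoly : (a + n) * (b + n) / ((c + n) * (n + 1)) ≤ 1 - p / (n + 1) := by
      rw [div_le_iff₀ (by positivity)]
      have hexp : (1 - p / (n+1)) * ((c + n) * (n + 1)) = (c+n)*(n+1) - p*(c+n) := by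
        field_simp
      rw [hexp]
      have : δ * n ≥ a * b - c * (1 - p) := by
        calc δ * n ≥ δ * N₀ := by apply mul_le_mul_of_nonneg_left hnN (le_of_lt hδ0)
          _ ≥ a * b - c * (1 - p) := by
            rw [ge_iff_le, ← div_le_iff₀' hδ0]; exact hN₀
      have hpδ : (c - p - a - b) * n = (δ - 1) * n := by
        have : c - p - a - b = δ - 1 := by simp only [hp, hδ]; ring
        rw [this]
      nlinarith [this, hpδ, hδ0, h1]
    -- v ratio equals (n/(n+1))^p
    have hvr : v (n + 1) = v n * ((n:ℝ) / (n + 1)) ^ p := by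
      simp only [hv]
      push_cast
      rw [Real.div_rpow (le_of_lt h1) (le_of_lt h2), Real.rpow_neg (le_of_lt h1),
        Real.rpow_neg (le_of_lt h2)]
      have e1 : ((n:ℝ)) ^ p ≠ 0 := by positivity
      have e2 : ((n:ℝ) + 1) ^ p ≠ 0 := by positivity
      field_simp
    -- u ratio
    have hur : u (n + 1) = u n * ((a + n) * (b + n) / ((c + n) * (n + 1))) := by
      simp only [hu]
      rw [poch_succ, poch_succ, poch_succ, Nat.factorial_succ]
      have : (0:ℝ) < c + n := by positivity
      push_cast
      field_simp
    rw [hvr, hur]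
    have hvn := hvpos n hn1
    have hchain : (a + n) * (b + n) / ((c + n) * (n + 1)) ≤ ((n:ℝ) / (n + 1)) ^ p :=
      le_trans hpoly hbern
    calc u n * ((a + n) * (b + n) / ((c + n) * (n + 1))) * v n
        ≤ u n * ((n:ℝ) / (n + 1)) ^ p * v n := by
          apply mul_le_mul_of_nonneg_right _ (le_of_lt hvn)
          exact mul_le_mul_of_nonneg_left hchain (le_of_lt (hupos n))
      _ = u n * (v n * ((n:ℝ) / (n + 1)) ^ p) := by ring
  -- inductive domination
  set C : ℝ := u N / v N with hC
  have hdom : ∀ n : ℕ, N ≤ n → u n ≤ C * v n := by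
    intro n hn
    induction n, hn using Nat.le_induction with
    | base =>
        have hvN := hvpos N (by omega)
        rw [hC, div_mul_cancel₀ _ (ne_of_gt hvN)]
    | succ n hn ih =>
        have h1 := hratio n hn
        have hvn := hvpos n (le_trans (by omega) hn)
        have hvn1 := hvpos (n+1) (by omega)
        nlinarith [hupos (n+1), hupos n]
  -- conclude summability
  have hvsum : Summable v := by
    simp only [hv]
    exact Real.summable_nat_rpow.mpr (by simp only [hp]; linarith)
  have hshift : Summable (fun n : ℕ => C * v (n + N)) :=
    ((summable_nat_add_iff N).mpr hvsum).mul_left C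
  have husum : Summable (fun n : ℕ => u (n + N)) := by
    apply Summable.of_nonneg_of_le (fun n => (hupos _).le) _ hshift
    intro n
    exact hdom (n + N) (by omega)
  exact (summable_nat_add_iff N).mp husum

lemma poch_vandermonde (b c : ℝ) (n : ℕ) :
    poch (b + c) n
      = ∑ ij ∈ antidiagonal n, (n.choose ij.1 : ℝ) * (poch b ij.1 * poch c ij.2) := by
  induction n with
  | zero => simp [poch_zero]
  | succ n ih =>
    rw [sum_antidiagonal_choose_succ_mul (fun i j => poch b i * poch c j) n,
      ← Finset.sum_add_distrib, poch_succ, ih, Finset.sum_mul]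
    apply Finset.sum_congr rfl
    intro ij hij
    have hn : ij.1 + ij.2 = n := Finset.HasAntidiagonal.mem_antidiagonal.mp hij
    have hnr : (ij.1 : ℝ) + ij.2 = n := by exact_mod_cast congrArg (Nat.cast : ℕ → ℝ) hn
    have hcc : ((n.choose ij.2 : ℕ) : ℝ) = ((n.choose ij.1 : ℕ) : ℝ) := by
      exact_mod_cast congrArg (Nat.cast : ℕ → ℝ) (Nat.choose_symm_of_eq_add hn.symm).symm
    rw [poch_succ, poch_succ]
    linear_combination (-((n.choose ij.1 : ℝ) * poch b ij.1 * poch c ij.2)) * hnr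
      - (poch b ij.1 * (b + ij.1) * poch c ij.2) * hcc

noncomputable def binomF (t b : ℝ) : ℝ := ∑' n : ℕ, poch b n / n.factorial * t ^ n

section binom
variable {t : ℝ} (ht1 : |t| < 1)
include ht1

lemma summable_binom_norm (b : ℝ) :
    Summable (fun n : ℕ => ‖poch b n / n.factorial * t ^ n‖) := by
  have h := summable_binom' |b| |t| (by rwa [abs_abs])
  apply Summable.of_nonneg_of_le (fun n => norm_nonneg _) _ h
  intro n
  have h1 : (0:ℝ) < n.factorial := by positivity
  have hp := poch_nonneg (abs_nonneg b) n
  rw [Real.norm_eq_abs, abs_mul, abs_div, abs_pow, Nat.abs_cast]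
  have hle : |poch b n| ≤ poch |b| n := by
    rw [poch, poch, Finset.abs_prod]
    apply Finset.prod_le_prod (fun i _ => abs_nonneg _)
    intro i _
    calc |b + (i:ℝ)| ≤ |b| + |(i:ℝ)| := abs_add_le _ _
      _ = |b| + i := by rw [Nat.abs_cast]
  gcongr <;> first | exact hle | positivity

lemma binomF_FE (b c : ℝ) : binomF t b * binomF t c = binomF t (b + c) := by
  rw [binomF, binomF, binomF,
    tsum_mul_tsum_eq_tsum_sum_antidiagonal_of_summable_norm
      (summable_binom_norm ht1 b) (summable_binom_norm ht1 c)]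
  apply tsum_congr
  intro n
  rw [poch_vandermonde, Finset.sum_div, Finset.sum_mul]
  apply Finset.sum_congr rfl
  intro ij hij
  have hn : ij.1 + ij.2 = n := Finset.HasAntidiagonal.mem_antidiagonal.mp hij
  have hfact : ((n.choose ij.1 : ℕ) : ℝ) * ij.1.factorial * ij.2.factorial = n.factorial := by
    have h := Nat.choose_mul_factorial_mul_factorial (show ij.1 ≤ n by omega)
    have h2 : n - ij.1 = ij.2 := by omega
    rw [h2] at h
    exact_mod_cast congrArg (Nat.cast : ℕ → ℝ) h
  have f1 : (0:ℝ) < ij.1.factorial := by positivity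
  have f2 : (0:ℝ) < ij.2.factorial := by positivity
  have f3 : (0:ℝ) < n.factorial := by positivity
  have htpow : t ^ ij.1 * t ^ ij.2 = t ^ n := by rw [← pow_add, hn]
  field_simp
  linear_combination (-(poch b ij.1 * poch c ij.2 * (t ^ ij.1 * t ^ ij.2))) * hfact
    + (poch b ij.1 * poch c ij.2 * (n.choose ij.1 : ℝ) * ij.1.factorial * ij.2.factorial) * htpow

lemma binomF_zero' : binomF t 0 = 1 := by
  rw [binomF, tsum_eq_single 0]
  · simp [poch_zero]
  · intro n hn
    have : poch 0 n = 0 := by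
      rw [poch]
      apply Finset.prod_eq_zero (Finset.mem_range.mpr (Nat.pos_of_ne_zero hn))
      simp
    simp [this]

end binom

section binom2
variable {t : ℝ} (ht0 : 0 ≤ t) (ht : t < 1)
include ht0 ht

lemma ht1' : |t| < 1 := by rwa [abs_of_nonneg ht0]

lemma binomF_one' : binomF t 1 = (1 - t)⁻¹ := by
  have h : ∀ n : ℕ, poch 1 n / n.factorial * t ^ n = t ^ n := by
    intro n
    rw [poch_one_eq]
    have : (0:ℝ) < n.factorial := by positivity
    field_simp
  rw [binomF, tsum_congr h, tsum_geometric_of_lt_one ht0 ht]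

lemma binomF_ge_one {b : ℝ} (hb : 0 ≤ b) : 1 ≤ binomF t b := by
  have hs := summable_binom' b t (ht1' ht0 ht)
  have h0 : poch b 0 / (0:ℕ).factorial * t ^ 0 = 1 := by simp [poch_zero]
  calc (1:ℝ) = poch b 0 / (0:ℕ).factorial * t ^ 0 := h0.symm
    _ ≤ binomF t b := by
        apply Summable.le_tsum hs 0
        intro n _
        have := poch_nonneg hb n
        positivity

lemma binomF_mono {b c : ℝ} (hb : 0 ≤ b) (hbc : b ≤ c) : binomF t b ≤ binomF t c := by
  apply Summable.tsum_le_tsum _ (summable_binom' b t (ht1' ht0 ht)) (summable_binom' c t (ht1' ht0 ht))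
  intro n
  have h1 : (0:ℝ) < n.factorial := by positivity
  have hA := poch_le_poch hb hbc n
  have hB := poch_nonneg hb n
  gcongr <;> first | exact hB | exact hA | positivity

lemma binomF_pos (b : ℝ) : 0 < binomF t b := by
  rcases le_or_gt 0 b with hb | hb
  · linarith [binomF_ge_one ht0 ht hb]
  · have h1 : binomF t b * binomF t (-b) = 1 := by
      rw [binomF_FE (ht1' ht0 ht), add_neg_cancel, binomF_zero' (ht1' ht0 ht)]
    have h2 : 0 < binomF t (-b) := by
      have := binomF_ge_one ht0 ht (show (0:ℝ) ≤ -b by linarith)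
      linarith
    by_contra h
    push_neg at h
    nlinarith

lemma binomF_pow (b : ℝ) : ∀ m : ℕ, binomF t b ^ m = binomF t (m * b)
  | 0 => by simp [binomF_zero' (ht1' ht0 ht)]
  | (m+1) => by
      rw [pow_succ, binomF_pow b m, binomF_FE (ht1' ht0 ht)]
      push_cast; ring_nf

lemma binomF_nat (p : ℕ) : binomF t p = (1 - t)⁻¹ ^ p := by
  induction p with
  | zero => push_cast; simp [binomF_zero' (ht1' ht0 ht)]
  | succ p ih =>
      have := binomF_FE (ht1' ht0 ht) (p : ℝ) 1
      rw [binomF_one' ht0 ht, ih] at this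
      rw [pow_succ]
      rw [this]
      norm_num

lemma binomF_rat {q : ℚ} (hq : 0 ≤ q) : binomF t (q : ℝ) = (1 - t) ^ (-(q:ℝ)) := by
  have h1t : 0 < 1 - t := by linarith
  set p : ℕ := q.num.toNat with hp
  have hpq : ((p : ℕ) : ℝ) = (q.den : ℝ) * (q : ℝ) := by
    have hnum : (q.num : ℝ) = (q : ℝ) * q.den := by
      rw [Rat.cast_def]
      field_simp
    have : ((p:ℕ):ℝ) = (q.num : ℝ) := by
      exact_mod_cast congrArg (Int.cast : ℤ → ℝ) (Int.toNat_of_nonneg (Rat.num_nonneg.mpr hq))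
    rw [this, hnum]; ring
  have hden : 0 < (q.den : ℕ) := q.pos
  -- f(q)^den = (1-t)⁻¹ ^ p
  have key : binomF t (q:ℝ) ^ (q.den : ℕ) = (1 - t)⁻¹ ^ p := by
    rw [binomF_pow ht0 ht, ← hpq]
    exact binomF_nat ht0 ht p
  -- rpow side
  have key2 : ((1 - t) ^ (-(q:ℝ))) ^ (q.den : ℕ) = (1 - t)⁻¹ ^ p := by
    rw [← Real.rpow_natCast ((1-t) ^ (-(q:ℝ))) q.den, ← Real.rpow_mul (le_of_lt h1t)]
    rw [show (-(q:ℝ)) * (q.den : ℕ) = -((p:ℕ):ℝ) by rw [hpq]; ring]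
    rw [Real.rpow_neg (le_of_lt h1t), Real.rpow_natCast]
    rw [inv_pow]
  have hfq : 0 ≤ binomF t (q:ℝ) := le_of_lt (binomF_pos ht0 ht _)
  have hgq : 0 ≤ (1 - t) ^ (-(q:ℝ)) := le_of_lt (Real.rpow_pos_of_pos h1t _)
  have := key.trans key2.symm
  exact (pow_left_strictMonoOn₀ hden.ne').injOn hfq hgq this
end binom2

section binom3
variable {t : ℝ} (ht0 : 0 ≤ t) (ht : t < 1)
include ht0 ht

lemma binomF_eq_rpow {b : ℝ} (hb : 0 < b) : binomF t b = (1 - t) ^ (-b) := by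
  have h1t : 0 < 1 - t := by linarith
  set g : ℝ → ℝ := fun y => (1 - t) ^ (-y) with hg
  have hgmono : Monotone g := by
    intro y z hyz
    exact Real.rpow_le_rpow_of_exponent_ge h1t (by linarith) (by linarith)
  have hgcont : Continuous g := by
    have : g = fun y => Real.exp (Real.log (1 - t) * (-y)) :=
      funext fun y => Real.rpow_def_of_pos h1t _
    rw [this]
    exact Real.continuous_exp.comp (continuous_const.mul continuous_neg)
  have hgq : ∀ q : ℚ, 0 ≤ q → g q = binomF t (q : ℝ) := fun q hq =>
    (binomF_rat ht0 ht hq).symm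
  have hub : binomF t b ≤ g b := by
    apply ge_of_tendsto (f := g)
      (hgcont.continuousAt.tendsto.mono_left (nhdsWithin_le_nhds (s := Set.Ioi b)))
    filter_upwards [self_mem_nhdsWithin] with y hy
    obtain ⟨q, hq1, hq2⟩ := exists_rat_btwn (Set.mem_Ioi.mp hy)
    have hq0 : (0:ℚ) ≤ q := by
      have : (0:ℝ) < q := lt_trans hb hq1
      exact_mod_cast this.le
    calc binomF t b ≤ binomF t q := binomF_mono ht0 ht (le_of_lt hb) (le_of_lt hq1)
      _ = g q := (hgq q hq0).symm
      _ ≤ g y := hgmono (le_of_lt hq2)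
  have hlb : g b ≤ binomF t b := by
    apply le_of_tendsto (f := g)
      (hgcont.continuousAt.tendsto.mono_left (nhdsWithin_le_nhds (s := Set.Iio b)))
    have hev : ∀ᶠ y in nhdsWithin b (Set.Iio b), 0 < y :=
      eventually_nhdsWithin_of_eventually_nhds (eventually_gt_nhds hb)
    filter_upwards [self_mem_nhdsWithin, hev] with y hy hy0
    obtain ⟨q, hq1, hq2⟩ := exists_rat_btwn (Set.mem_Iio.mp hy)
    have hq0 : (0:ℚ) ≤ q := by
      have : (0:ℝ) < q := lt_trans hy0 hq1
      exact_mod_cast this.le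
    calc g y ≤ g q := hgmono (le_of_lt hq1)
      _ = binomF t q := hgq q hq0
      _ ≤ binomF t b := binomF_mono ht0 ht (by exact_mod_cast hq0) (le_of_lt hq2)
  linarith

lemma hasSum_binom {b : ℝ} (hb : 0 < b) :
    HasSum (fun n : ℕ => poch b n / n.factorial * t ^ n) ((1 - t) ^ (-b)) :=
  (Summable.hasSum_iff (summable_binom' b t (ht1' ht0 ht))).mpr
    (binomF_eq_rpow ht0 ht hb)

end binom3

lemma betaReal_eqOn {p q : ℝ} :
    ∀ x : ℝ, x ∈ Set.Icc (0:ℝ) 1 →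
      ((x:ℂ) ^ ((p:ℂ) - 1) * ((1:ℂ) - x) ^ ((q:ℂ) - 1))
        = ((x ^ (p-1) * (1-x) ^ (q-1) : ℝ) : ℂ) := by
  intro x hx
  obtain ⟨h0, h1⟩ := hx
  have e1 : ((x ^ (p-1) : ℝ) : ℂ) = (x:ℂ) ^ ((p:ℂ) - 1) := by
    rw [Complex.ofReal_cpow h0]
    norm_num
  have e2 : (((1-x) ^ (q-1) : ℝ) : ℂ) = ((1:ℂ) - x) ^ ((q:ℂ) - 1) := by
    rw [Complex.ofReal_cpow (by linarith)]
    push_cast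
    norm_num
  rw [Complex.ofReal_mul, e1, e2]

lemma betaReal_integrableOn {p q : ℝ} (hp : 0 < p) (hq : 0 < q) :
    IntegrableOn (fun t : ℝ => t ^ (p-1) * (1-t) ^ (q-1)) (Set.Ioc 0 1) volume := by
  have hC := Complex.betaIntegral_convergent (u := (p:ℂ)) (v := (q:ℂ))
      (by simpa using hp) (by simpa using hq)
  have hC2 : IntegrableOn (fun x : ℝ => (x:ℂ) ^ ((p:ℂ)-1) * ((1:ℂ)-x) ^ ((q:ℂ)-1))
      (Set.Ioc 0 1) volume :=
    (intervalIntegrable_iff_integrableOn_Ioc_of_le zero_le_one).mp hC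
  have hre : IntegrableOn
      (fun x : ℝ => ((x:ℂ) ^ ((p:ℂ)-1) * ((1:ℂ)-x) ^ ((q:ℂ)-1)).re) (Set.Ioc 0 1) volume :=
    hC2.re
  apply hre.congr_fun _ measurableSet_Ioc
  intro x hx
  show ((x:ℂ) ^ ((p:ℂ)-1) * ((1:ℂ)-x) ^ ((q:ℂ)-1)).re = x ^ (p-1) * (1-x) ^ (q-1)
  rw [betaReal_eqOn x (Set.mem_Icc_of_Ioc hx), Complex.ofReal_re]

lemma betaReal_value {p q : ℝ} (hp : 0 < p) (hq : 0 < q) :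
    ∫ t in Set.Ioc (0:ℝ) 1, t ^ (p-1) * (1-t) ^ (q-1)
      = Real.Gamma p * Real.Gamma q / Real.Gamma (p+q) := by
  have key := Complex.Gamma_mul_Gamma_eq_betaIntegral
      (s := (p:ℂ)) (t := (q:ℂ)) (by simpa using hp) (by simpa using hq)
  have h1 : Complex.betaIntegral (p:ℂ) (q:ℂ)
      = ((∫ t in (0:ℝ)..1, t ^ (p-1) * (1-t) ^ (q-1) : ℝ) : ℂ) := by
    rw [Complex.betaIntegral, ← intervalIntegral.integral_ofReal]
    apply intervalIntegral.integral_congr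
    intro x hx
    rw [Set.uIcc_of_le (zero_le_one (α := ℝ))] at hx
    exact (betaReal_eqOn x hx)
  have h2 : (∫ t in (0:ℝ)..1, t ^ (p-1) * (1-t) ^ (q-1))
      = ∫ t in Set.Ioc (0:ℝ) 1, t ^ (p-1) * (1-t) ^ (q-1) :=
    intervalIntegral.integral_of_le zero_le_one
  rw [h1, ← Complex.ofReal_add, Complex.Gamma_ofReal, Complex.Gamma_ofReal,
    Complex.Gamma_ofReal] at key
  have key2 : Real.Gamma p * Real.Gamma q
      = Real.Gamma (p+q) * ∫ t in (0:ℝ)..1, t ^ (p-1) * (1-t) ^ (q-1) := by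
    exact_mod_cast key
  have hΓ : 0 < Real.Gamma (p+q) := Real.Gamma_pos_of_pos (by linarith)
  rw [← h2]
  field_simp at key2 ⊢
  linarith [key2]

theorem gauss_hasSum {a b c : ℝ} (ha : 0 < a) (hb : 0 < b) (hca : 0 < c - a)
    (hcab : 0 < c - a - b) :
    HasSum (fun n : ℕ => poch a n * poch b n / (poch c n * n.factorial))
      (Real.Gamma c * Real.Gamma (c-a-b) / (Real.Gamma (c-a) * Real.Gamma (c-b))) := by
  have hc : 0 < c := by linarith
  have hsum := summable_gauss_one ha hb (by linarith)
  set u : ℕ → ℝ := fun n => poch a n * poch b n / (poch c n * n.factorial) with hu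
  set F : ℕ → ℝ → ℝ :=
    fun n t => poch b n / n.factorial * (t ^ (a + n - 1) * (1-t) ^ (c - a - 1)) with hF
  set K0 : ℝ := Real.Gamma a * Real.Gamma (c-a) / Real.Gamma c with hK0
  have hΓa := Real.Gamma_pos_of_pos ha
  have hΓc := Real.Gamma_pos_of_pos hc
  have hΓca := Real.Gamma_pos_of_pos hca
  have hΓcab := Real.Gamma_pos_of_pos hcab
  have hΓcb : 0 < Real.Gamma (c-b) := Real.Gamma_pos_of_pos (by linarith)
  -- each F n is integrable
  have hFint : ∀ n : ℕ, IntegrableOn (F n) (Set.Ioc (0:ℝ) 1) volume := by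
    intro n
    have h := (betaReal_integrableOn (p := a + n) (q := c - a) (by positivity) hca).const_mul
        (poch b n / n.factorial)
    exact h
  -- value of each integral
  have hFval : ∀ n : ℕ, ∫ t in Set.Ioc (0:ℝ) 1, F n t = K0 * u n := by
    intro n
    have hval := betaReal_value (p := a + n) (q := c - a) (by positivity) hca
    have hexp : a + (n:ℝ) + (c - a) = c + n := by ring
    rw [hexp, Gamma_poch ha n, Gamma_poch hc n] at hval
    have : ∫ t in Set.Ioc (0:ℝ) 1, F n t
        = poch b n / n.factorial * ∫ t in Set.Ioc (0:ℝ) 1, t ^ (a + n - 1) * (1-t) ^ (c-a-1) := by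
      rw [← MeasureTheory.integral_const_mul]
    rw [this, hval, hK0, hu]
    have h1 : (0:ℝ) < n.factorial := by positivity
    have h2 := poch_pos hc n
    field_simp
  -- norm integrals
  have hFnorm : ∀ n : ℕ, (∫ t in Set.Ioc (0:ℝ) 1, ‖F n t‖) = K0 * u n := by
    intro n
    rw [← hFval n]
    apply setIntegral_congr_fun measurableSet_Ioc
    intro t htmem
    obtain ⟨ht0, ht1⟩ := htmem
    have hbn := poch_nonneg hb.le n
    have hfa : (0:ℝ) ≤ t ^ (a + n - 1) := Real.rpow_nonneg ht0.le _
    have hfb : (0:ℝ) ≤ (1-t) ^ (c - a - 1) := Real.rpow_nonneg (by linarith) _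
    show ‖F n t‖ = F n t
    rw [Real.norm_eq_abs, abs_of_nonneg]
    simp only [hF]
    positivity
  have hFsummable : Summable (fun n : ℕ => ∫ t in Set.Ioc (0:ℝ) 1, ‖F n t‖) := by
    apply Summable.congr (hsum.mul_left K0)
    intro n
    exact (hFnorm n).symm
  -- interchange
  have hswap := integral_tsum_of_summable_integral_norm hFint hFsummable
  -- pointwise value of the sum
  have hone : ∀ᵐ t : ℝ ∂volume, t ≠ (1:ℝ) := by
    have h0 : volume ({(1:ℝ)} : Set ℝ) = 0 := measure_singleton 1
    have := measure_eq_zero_iff_ae_notMem.mp h0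
    filter_upwards [this] with t ht
    simpa using ht
  have hptwise : ∫ t in Set.Ioc (0:ℝ) 1, (∑' n, F n t)
      = ∫ t in Set.Ioc (0:ℝ) 1, t ^ (a - 1) * (1-t) ^ ((c-a-b) - 1) := by
    apply setIntegral_congr_ae measurableSet_Ioc
    filter_upwards [hone] with t ht1 htmem
    obtain ⟨h0, h1'⟩ := htmem
    have h1 : t < 1 := lt_of_le_of_ne h1' ht1
    have h1t : (0:ℝ) < 1 - t := by linarith
    have hbs := hasSum_binom h0.le h1 hb
    have hFeq : (fun n : ℕ => F n t)
        = fun n : ℕ => (t ^ (a-1) * (1-t) ^ (c-a-1)) * (poch b n / n.factorial * t ^ n) := by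
      funext n
      simp only [hF]
      rw [show a + (n:ℝ) - 1 = (a-1) + (n:ℝ) by ring, Real.rpow_add h0, Real.rpow_natCast]
      ring
    rw [hFeq, (hbs.mul_left _).tsum_eq]
    rw [mul_assoc, ← Real.rpow_add h1t]
    ring_nf
  -- final computation
  have hbeta2 := betaReal_value (p := a) (q := c - a - b) ha hcab
  rw [show a + (c - a - b) = c - b by ring] at hbeta2
  have hKsum : K0 * (∑' n, u n) = Real.Gamma a * Real.Gamma (c-a-b) / Real.Gamma (c-b) := by
    rw [← tsum_mul_left]
    have : (fun n => K0 * u n) = fun n => ∫ t in Set.Ioc (0:ℝ) 1, F n t :=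
      funext fun n => (hFval n).symm
    rw [this, hswap, hptwise, hbeta2]
  have htsum : ∑' n, u n
      = Real.Gamma c * Real.Gamma (c-a-b) / (Real.Gamma (c-a) * Real.Gamma (c-b)) := by
    rw [hK0] at hKsum
    field_simp at hKsum ⊢
    nlinarith [hKsum]
  exact (Summable.hasSum_iff hsum).mpr htsum

/-- Appell's `F₁` at second argument `1`:
the defining double series converges and
`F₁(α,β,β′;γ;x,1) = Γ(γ)Γ(γ−α−β′)/(Γ(γ−α)Γ(γ−β′)) · F(α,β;γ−β′;x)`. -/
theorem stmt_15 (α β β' γ x : ℝ)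
    (hα : 0 < α) (hβ' : 0 < β') (h1 : 0 < γ - α) (h2 : 0 < γ - β') (h3 : 0 < γ - α - β')
    (hx : x ∈ Set.Ioo (-1 : ℝ) 1) :
    Summable (fun p : ℕ × ℕ =>
        poch α (p.1 + p.2) * poch β p.1 * poch β' p.2 /
            (poch γ (p.1 + p.2) * (p.1.factorial : ℝ) * (p.2.factorial : ℝ)) *
          x ^ p.1 * (1 : ℝ) ^ p.2)
    ∧ appellF1 α β β' γ x 1
        = Real.Gamma γ * Real.Gamma (γ - α - β') /
            (Real.Gamma (γ - α) * Real.Gamma (γ - β')) * gaussF α β (γ - β') x := by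
  obtain ⟨hx1, hx2⟩ := hx
  have hxabs : |x| < 1 := abs_lt.mpr ⟨hx1, hx2⟩
  have hγ : 0 < γ := by linarith
  set f : ℕ × ℕ → ℝ := fun p =>
    poch α (p.1 + p.2) * poch β p.1 * poch β' p.2 /
        (poch γ (p.1 + p.2) * (p.1.factorial : ℝ) * (p.2.factorial : ℝ)) *
      x ^ p.1 * (1 : ℝ) ^ p.2 with hf
  -- the inner Gauss sums
  have hG : ∀ m : ℕ, HasSum
      (fun n : ℕ => poch (α + m) n * poch β' n / (poch (γ + m) n * n.factorial))
      (Real.Gamma (γ + m) * Real.Gamma (γ - α - β') /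
        (Real.Gamma (γ - α) * Real.Gamma (γ + m - β'))) := by
    intro m
    have h := gauss_hasSum (a := α + m) (b := β') (c := γ + m)
      (by positivity) hβ' (by linarith) (by linarith)
    rw [show γ + (m:ℝ) - (α + m) = γ - α by ring] at h
    exact h
  -- generic rearrangement of the double-sum term
  have hre : ∀ (β₀ x₀ : ℝ) (m n : ℕ),
      poch α (m + n) * poch β₀ m * poch β' n /
          (poch γ (m + n) * (m.factorial : ℝ) * (n.factorial : ℝ)) * x₀ ^ m * (1:ℝ) ^ n
        = (poch α m * poch β₀ m / (poch γ m * m.factorial) * x₀ ^ m) *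
          (poch (α + m) n * poch β' n / (poch (γ + m) n * n.factorial)) := by
    intro β₀ x₀ m n
    rw [poch_add α m n, poch_add γ m n, one_pow, mul_one]
    have e1 : (0:ℝ) < m.factorial := by positivity
    have e2 : (0:ℝ) < n.factorial := by positivity
    have e3 := poch_pos hγ m
    have e4 := poch_pos (show (0:ℝ) < γ + m by positivity) n
    field_simp
  -- the closed form of each inner sum
  have hS : ∀ m : ℕ, Real.Gamma (γ + m) * Real.Gamma (γ - α - β') /
        (Real.Gamma (γ - α) * Real.Gamma (γ + m - β'))
      = Real.Gamma γ * Real.Gamma (γ - α - β') /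
          (Real.Gamma (γ - α) * Real.Gamma (γ - β')) * (poch γ m / poch (γ - β') m) := by
    intro m
    rw [Gamma_poch hγ m, show γ + (m:ℝ) - β' = (γ - β') + m by ring, Gamma_poch h2 m]
    have e1 := poch_pos hγ m
    have e2 := poch_pos h2 m
    have g1 := Real.Gamma_pos_of_pos hγ
    have g2 := Real.Gamma_pos_of_pos h1
    have g3 := Real.Gamma_pos_of_pos h2
    have g4 := Real.Gamma_pos_of_pos h3
    field_simp
  -- summability
  have habs : Summable f := by
    set g2 : ℕ × ℕ → ℝ := fun p =>
      poch α (p.1 + p.2) * poch |β| p.1 * poch β' p.2 /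
          (poch γ (p.1 + p.2) * (p.1.factorial : ℝ) * (p.2.factorial : ℝ)) *
        |x| ^ p.1 * (1:ℝ) ^ p.2 with hg2
    have hg2nn : ∀ p, 0 ≤ g2 p := by
      intro p
      have := poch_pos hα (p.1 + p.2)
      have := poch_nonneg (abs_nonneg β) p.1
      have := poch_pos hβ' p.2
      have := poch_pos hγ (p.1 + p.2)
      have e1 : (0:ℝ) < p.1.factorial := by positivity
      have e2 : (0:ℝ) < p.2.factorial := by positivity
      simp only [hg2, one_pow, mul_one]
      positivity
    have hg2sum : Summable g2 := by
      rw [summable_prod_of_nonneg hg2nn]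
      constructor
      · intro m
        apply Summable.congr (((hG m).summable).mul_left
          (poch α m * poch |β| m / (poch γ m * m.factorial) * |x| ^ m))
        intro n
        exact (hre |β| |x| m n).symm
      · apply Summable.congr ((summable_gauss_lt_one (a := α) (b := |β|) (c := γ - β')
          hα.le (abs_nonneg β) h2 (abs_nonneg x) hxabs).mul_left
          (Real.Gamma γ * Real.Gamma (γ - α - β') /
            (Real.Gamma (γ - α) * Real.Gamma (γ - β'))))
        intro m
        have : ∑' n, g2 (m, n)
            = (poch α m * poch |β| m / (poch γ m * m.factorial) * |x| ^ m) *
              (Real.Gamma (γ + m) * Real.Gamma (γ - α - β') /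
                (Real.Gamma (γ - α) * Real.Gamma (γ + m - β'))) := by
          rw [← ((hG m).mul_left
            (poch α m * poch |β| m / (poch γ m * m.factorial) * |x| ^ m)).tsum_eq]
          apply tsum_congr
          intro n
          exact (hre |β| |x| m n)
        rw [this, hS m]
        have e1 := poch_pos hγ m
        have e2 := poch_pos h2 m
        have e3 : (0:ℝ) < m.factorial := by positivity
        field_simp
    apply Summable.of_abs
    apply Summable.of_nonneg_of_le (fun p => abs_nonneg _) _ hg2sum
    intro p
    simp only [hf, hg2, one_pow, mul_one]
    have e1 := poch_pos hα (p.1 + p.2)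
    have e2 := poch_pos hβ' p.2
    have e3 := poch_pos hγ (p.1 + p.2)
    have e4 : (0:ℝ) < p.1.factorial := by positivity
    have e5 : (0:ℝ) < p.2.factorial := by positivity
    have hDpos : (0:ℝ) < poch γ (p.1 + p.2) * (p.1.factorial:ℝ) * (p.2.factorial:ℝ) := by
      positivity
    have hnum : |poch α (p.1+p.2) * poch β p.1 * poch β' p.2|
        ≤ poch α (p.1+p.2) * poch |β| p.1 * poch β' p.2 := by
      rw [abs_mul, abs_mul, abs_of_pos e1, abs_of_pos e2]
      gcongr
      exact abs_poch_le β p.1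
    calc |poch α (p.1 + p.2) * poch β p.1 * poch β' p.2 /
          (poch γ (p.1 + p.2) * (p.1.factorial:ℝ) * (p.2.factorial:ℝ)) * x ^ p.1|
        = |poch α (p.1 + p.2) * poch β p.1 * poch β' p.2| /
          (poch γ (p.1 + p.2) * (p.1.factorial:ℝ) * (p.2.factorial:ℝ)) * |x| ^ p.1 := by
          rw [abs_mul, abs_pow, abs_div, abs_of_pos hDpos]
      _ ≤ poch α (p.1+p.2) * poch |β| p.1 * poch β' p.2 /
          (poch γ (p.1 + p.2) * (p.1.factorial:ℝ) * (p.2.factorial:ℝ)) * |x| ^ p.1 := by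
          gcongr
  refine ⟨habs, ?_⟩
  -- the value
  rw [appellF1]
  have hsplit : ∑' p : ℕ × ℕ,
      poch α (p.1 + p.2) * poch β p.1 * poch β' p.2 /
          (poch γ (p.1 + p.2) * (p.1.factorial : ℝ) * (p.2.factorial : ℝ)) *
        x ^ p.1 * (1:ℝ) ^ p.2
      = ∑' (m : ℕ) (n : ℕ), f (m, n) := Summable.tsum_prod' habs (fun m =>
        (habs.prod_factor m))
  rw [hsplit]
  rw [gaussF, ← tsum_mul_left]
  apply tsum_congr
  intro m
  have hinner : ∑' n, f (m, n)
      = (poch α m * poch β m / (poch γ m * m.factorial) * x ^ m) *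
        (Real.Gamma (γ + m) * Real.Gamma (γ - α - β') /
          (Real.Gamma (γ - α) * Real.Gamma (γ + m - β'))) := by
    rw [← ((hG m).mul_left
      (poch α m * poch β m / (poch γ m * m.factorial) * x ^ m)).tsum_eq]
    apply tsum_congr
    intro n
    exact (hre β x m n)
  rw [hinner, hS m]
  have e1 := poch_pos hγ m
  have e2 := poch_pos h2 m
  have e3 : (0:ℝ) < m.factorial := by positivity
  field_simp
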